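/- Let B_n be the Bernstein operators on the ring of symmetric functions, satisfying B_n B_m = -B_{m-1} B_{n+1} and B_λ · 1 = s_λ for partitions λ. Then for a partition λ of length l and integer n, B_n(s_λ) = 0 if and only if n = λ_j - j for some j ∈ {1, …, l} or n < -l. -/

import Mathlib

section Aux
variable {M : Type*} [AddCommGroup M] [Module ℂ M] (B : ℤ → Module.End ℂ M)

private lemma bswap (hrel : ∀ n m : ℤ, B n * B m = -(B (m - 1) * B (n + 1)))
    (n m : ℤ) (x : M) : B n (B m x) = -(B (m - 1) (B (n + 1) x)) := by
  have h := congrArg (fun f : Module.End ℂ M => f x) (hrel n m)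
  simpa [Module.End.mul_apply] using h

private lemma bconsec (hrel : ∀ n m : ℤ, B n * B m = -(B (m - 1) * B (n + 1)))
    (m : ℤ) (x : M) : B m (B (m + 1) x) = 0 := by
  have h := bswap B hrel m (m + 1) x
  simp only [add_sub_cancel_right] at h
  have h2 : (2 : ℂ) • B m (B (m + 1) x) = 0 := by
    rw [two_smul]
    nth_rewrite 2 [h]
    simp
  have := smul_eq_zero.mp h2
  simpa using this.resolve_left (by norm_num)

private lemma bmove (hrel : ∀ n m : ℤ, B n * B m = -(B (m - 1) * B (n + 1))) :
    ∀ (L : List ℤ) (n : ℤ) (x : M),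
    B n ((L.map B).prod x) =
      ((-1 : ℂ) ^ L.length) •
        ((L.map (fun a => a - 1)).map B).prod (B (n + L.length) x)
  | [], n, x => by simp
  | m :: L, n, x => by
    simp only [List.map_cons, List.prod_cons, Module.End.mul_apply, List.length_cons]
    rw [bswap B hrel n m ((L.map B).prod x), bmove hrel L (n + 1) x]
    rw [map_smul, ← neg_smul]
    congr 2
    · ring
    · congr 2
      push_cast
      ring

private lemma bmove2 (hrel : ∀ n m : ℤ, B n * B m = -(B (m - 1) * B (n + 1)))
    (L1 L2 : List ℤ) (n : ℤ) (x : M) :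
    B n (((L1 ++ L2).map B).prod x) =
      ((-1 : ℂ) ^ L1.length) •
        ((L1.map (fun a => a - 1)).map B).prod
          (B (n + L1.length) ((L2.map B).prod x)) := by
  rw [List.map_append, List.prod_append, Module.End.mul_apply, bmove B hrel]

private lemma ball_ne (one : M)
    (hnz : ∀ (k : ℕ) (q : Fin k → ℕ), Antitone q → (∀ a, 1 ≤ q a) →
      (List.ofFn (fun a => B ((q a : ℤ)))).prod one ≠ 0)
    (L : List ℤ) (hs : L.Pairwise (· ≥ ·)) (h1 : ∀ a ∈ L, 1 ≤ a) :
    (L.map B).prod one ≠ 0 := by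
  have e1 : L.map B = List.ofFn (fun i : Fin L.length => B (((L.get i).toNat : ℤ))) := by
    conv_lhs => rw [← List.ofFn_get L]
    rw [List.map_ofFn]
    congr 1
    funext i
    simp only [Function.comp_apply]
    congr 1
    have hmem : L.get i ∈ L := L.get_mem i
    have := h1 _ hmem
    omega
  rw [e1]
  apply hnz L.length (fun i => (L.get i).toNat)
  · intro a b hab
    rcases eq_or_lt_of_le hab with h | h
    · subst h; exact le_rfl
    · have h2 := List.pairwise_iff_get.mp hs a b h
      show (L.get b).toNat ≤ (L.get a).toNat
      omega
  · intro a
    show 1 ≤ (L.get a).toNat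
    have hmem : L.get a ∈ L := L.get_mem a
    have := h1 _ hmem
    omega

private lemma bnonneg_ne (one : M) (hzero : B 0 one = one)
    (hnz : ∀ (k : ℕ) (q : Fin k → ℕ), Antitone q → (∀ a, 1 ≤ q a) →
      (List.ofFn (fun a => B ((q a : ℤ)))).prod one ≠ 0)
    (L : List ℤ) (hs : L.Pairwise (· ≥ ·)) (h0 : ∀ a ∈ L, 0 ≤ a) :
    (L.map B).prod one ≠ 0 := by
  induction L using List.reverseRecOn with
  | nil =>
    simpa using hnz 0 (fun _ => 1) (fun a b _ => le_rfl) (fun a => le_rfl)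
  | append_singleton L a ih =>
    by_cases ha : a = 0
    · subst ha
      rw [List.map_append, List.prod_append]
      simp only [List.map_cons, List.map_nil, List.prod_cons, List.prod_nil, mul_one,
        Module.End.mul_apply, hzero]
      exact ih (List.pairwise_append.mp hs).1 (fun b hb => h0 b (by simp [hb]))
    · have ha1 : 1 ≤ a := by have := h0 a (by simp); omega
      apply ball_ne B one hnz _ hs
      intro b hb
      rcases List.mem_append.mp hb with hb | hb
      · have := (List.pairwise_append.mp hs).2.2 b hb a (by simp)
        omega
      · simp only [List.mem_singleton] at hb
        omega

end Aux

theorem stmt_15 {M : Type*} [AddCommGroup M] [Module ℂ M]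
    (B : ℤ → Module.End ℂ M) (one : M)
    (hrel : ∀ n m : ℤ, B n * B m = -(B (m - 1) * B (n + 1)))
    (hneg : ∀ m : ℤ, m < 0 → B m one = 0)
    (hzero : B 0 one = one)
    (hnz : ∀ (k : ℕ) (q : Fin k → ℕ), Antitone q → (∀ a, 1 ≤ q a) →
      (List.ofFn (fun a => B ((q a : ℤ)))).prod one ≠ 0)
    (l : ℕ) (p : Fin l → ℕ) (hp : Antitone p) (hpos : ∀ a, 1 ≤ p a) (n : ℤ) :
    B n ((List.ofFn (fun a => B ((p a : ℤ)))).prod one) = 0 ↔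
      (∃ j : Fin l, n = (p j : ℤ) - ((j : ℤ) + 1)) ∨ n < -(l : ℤ) := by
  classical
  set L : List ℤ := List.ofFn (fun a => (p a : ℤ)) with hLdef
  have hlen : L.length = l := by simp [hLdef]
  have hget : ∀ (i : ℕ) (hi : i < l) (h2 : i < L.length), L[i]'h2 = (p ⟨i, hi⟩ : ℤ) := by
    intro i hi h2
    simp [hLdef]
  have hprodeq : (List.ofFn (fun a => B ((p a : ℤ)))).prod = (L.map B).prod := by
    rw [hLdef, List.map_ofFn]
    rfl
  rw [hprodeq]
  constructor
  · -- hard direction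
    intro hz
    by_contra hcon
    push_neg at hcon
    obtain ⟨hne, hge⟩ := hcon
    have hex : ∃ m : ℕ, l ≤ m ∨ ∃ h : m < l, (p ⟨m, h⟩ : ℤ) - ((m : ℤ) + 1) < n :=
      ⟨l, Or.inl le_rfl⟩
    obtain ⟨j, hjl, hlow, hhigh⟩ :
        ∃ j : ℕ, j ≤ l ∧
          (∀ i, i < j → ∃ hil : i < l, n < (p ⟨i, hil⟩ : ℤ) - ((i : ℤ) + 1)) ∧
          (∀ h : j < l, (p ⟨j, h⟩ : ℤ) - ((j : ℤ) + 1) < n) := by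
      refine ⟨Nat.find hex, Nat.find_min' hex (Or.inl le_rfl), ?_, ?_⟩
      · intro i hij
        have hmin := Nat.find_min hex hij
        push_neg at hmin
        obtain ⟨h1, h2⟩ := hmin
        have hil : i < l := by omega
        refine ⟨hil, ?_⟩
        have hle := h2 hil
        have hne' : n ≠ (p ⟨i, hil⟩ : ℤ) - ((i : ℤ) + 1) := by
          have h := hne ⟨i, hil⟩
          simpa using h
        omega
      · intro h
        rcases Nat.find_spec hex with h1 | ⟨h2, h3⟩
        · omega
        · exact h3
    have hjlen : (L.take j).length = j := by
      rw [List.length_take, hlen]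
      omega
    have hkey : B n ((L.map B).prod one) =
        ((-1 : ℂ) ^ j) •
          ((((L.take j).map (fun a => a - 1)) ++ (n + (j : ℤ)) :: L.drop j).map B).prod one := by
      conv_lhs => rw [← List.take_append_drop j L]
      rw [bmove2 B hrel, hjlen]
      rw [List.map_append, List.prod_append, Module.End.mul_apply, List.map_cons,
        List.prod_cons, Module.End.mul_apply]
    have hmpos : 0 ≤ n + (j : ℤ) := by
      rcases Nat.lt_or_ge j l with hjl' | hjl'
      · have h1 := hhigh hjl'
        have h2 := hpos ⟨j, hjl'⟩
        omega
      · have : j = l := by omega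
        subst this
        omega
    have hchainL : L.IsChain (· ≥ ·) := by
      rw [List.isChain_iff_getElem]
      intro i hi
      rw [hget i (by omega) (by omega), hget (i+1) (by omega) (by omega)]
      have := hp (show (⟨i, by omega⟩ : Fin l) ≤ ⟨i+1, by omega⟩ by simp)
      exact_mod_cast this
    have hchain : (((L.take j).map (fun a => a - 1)) ++ (n + (j : ℤ)) :: L.drop j).IsChain (· ≥ ·) := by
      rw [List.isChain_append]
      refine ⟨?_, ?_, ?_⟩
      · rw [List.isChain_map]
        exact (hchainL.take j).imp (fun a b hab => by simpa using hab)
      · rw [List.isChain_cons]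
        refine ⟨?_, hchainL.drop j⟩
        intro y hy
        rw [List.head?_drop] at hy
        rcases Nat.lt_or_ge j l with hjl' | hjl'
        · rw [List.getElem?_eq_getElem (by omega)] at hy
          simp only [Option.mem_def, Option.some.injEq] at hy
          subst hy
          rw [hget j hjl' (by omega)]
          have := hhigh hjl'
          omega
        · rw [List.getElem?_eq_none (by omega)] at hy
          simp at hy
      · intro x hx y hy
        simp only [List.head?_cons, Option.mem_def, Option.some.injEq] at hy
        subst hy
        rcases Nat.eq_zero_or_pos j with hj0 | hj0
        · rw [hj0] at hx
          simp at hx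
        · obtain ⟨hil, hlt'⟩ := hlow (j-1) (by omega)
          rw [List.getLast?_map, List.getLast?_eq_getElem?, List.length_take] at hx
          have hlen' : min j L.length - 1 = j - 1 := by omega
          rw [hlen', List.getElem?_take, if_pos (by omega),
            List.getElem?_eq_getElem (by omega)] at hx
          rw [hget (j-1) hil (by omega)] at hx
          simp only [Option.map_some, Option.mem_def, Option.some.injEq] at hx
          subst hx
          have hc : ((j - 1 : ℕ) : ℤ) = (j : ℤ) - 1 := by omega
          rw [hc] at hlt'
          omega
    have hne0 : ((((L.take j).map (fun a => a - 1)) ++ (n + (j : ℤ)) :: L.drop j).map B).prod one ≠ 0 := by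
      apply bnonneg_ne B one hzero hnz
      · rw [← List.isChain_iff_pairwise]
        exact hchain
      · intro a ha
        rcases List.mem_append.mp ha with ha | ha
        · obtain ⟨b, hb, rfl⟩ := List.mem_map.mp ha
          have hbL : b ∈ L := List.mem_of_mem_take hb
          rw [hLdef, List.mem_ofFn] at hbL
          obtain ⟨i, rfl⟩ := hbL
          have := hpos i
          show 0 ≤ (p i : ℤ) - 1
          omega
        · rcases List.mem_cons.mp ha with rfl | ha
          · exact hmpos
          · have hbL : a ∈ L := List.mem_of_mem_drop ha
            rw [hLdef, List.mem_ofFn] at hbL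
            obtain ⟨i, rfl⟩ := hbL
            have := hpos i
            show 0 ≤ (p i : ℤ)
            omega
    rw [hkey] at hz
    rcases smul_eq_zero.mp hz with h | h
    · exact (pow_ne_zero j (neg_ne_zero.mpr one_ne_zero)) h
    · exact hne0 h
  · rintro (⟨j, hj⟩ | hlt)
    · have hjl : (j : ℕ) < l := j.isLt
      have hsplit : L = L.take (j : ℕ) ++ (L[(j : ℕ)]'(by omega) :: L.drop ((j : ℕ) + 1)) := by
        rw [← List.drop_eq_getElem_cons (by omega), List.take_append_drop]
      rw [hsplit, bmove2 B hrel]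
      have hlen1 : (L.take (j : ℕ)).length = (j : ℕ) := by
        rw [List.length_take, hlen]
        omega
      rw [hlen1]
      have hz : B (n + ((j : ℕ) : ℤ))
          ((((L[(j : ℕ)]'(by omega)) :: L.drop ((j : ℕ) + 1)).map B).prod one) = 0 := by
        simp only [List.map_cons, List.prod_cons, Module.End.mul_apply]
        rw [hget (j : ℕ) hjl (by omega)]
        have he : n + ((j : ℕ) : ℤ) = (p j : ℤ) - 1 := by rw [hj]; ring
        rw [he]
        have h2 := bconsec B hrel ((p j : ℤ) - 1) (((L.drop ((j : ℕ) + 1)).map B).prod one)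
        have he2 : (p j : ℤ) - 1 + 1 = (p j : ℤ) := by ring
        rw [he2] at h2
        exact h2
      rw [hz, map_zero, smul_zero]
    · rw [bmove B hrel L n one]
      have h0 : B (n + L.length) one = 0 := by
        apply hneg
        rw [hlen]
        omega
      rw [h0, map_zero, smul_zero]
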